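/- Let f : ℝ → ℝ be strictly increasing on [0, ∞) with f(t) ≥ 0 for all t ≥ 0. Then for every y > 0 there exists x > 0 such that x·f(x)/(f(x) + f(y)) + y·f(y)/(f(x) + f(y)) < x·f(x)/(f(x) + f(0)). (All denominators are positive since f is strictly increasing and nonnegative on [0,∞) and x, y > 0.) -/

import Mathlib

/-- **core of Theorem 3.** If `f` is strictly increasing and
nonnegative on `[0, ∞)`, then for every `y > 0` there exists `x > 0` such that
`x·f(x)/(f(x)+f(y)) + y·f(y)/(f(x)+f(y)) < x·f(x)/(f(x)+f(0))`. -/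
theorem exists_x_no_dominating_commitment
    (f : ℝ → ℝ) (hmono : StrictMonoOn f (Set.Ici 0))
    (hnonneg : ∀ t : ℝ, 0 ≤ t → 0 ≤ f t)
    (y : ℝ) (hy : 0 < y) :
    ∃ x : ℝ, 0 < x ∧
      x * f x / (f x + f y) + y * f y / (f x + f y) < x * f x / (f x + f 0) := by
  have h0y : f 0 < f y := hmono Set.self_mem_Ici (Set.mem_Ici.mpr hy.le) hy
  set d : ℝ := f y - f 0 with hdref
  have hd : 0 < d := sub_pos.mpr h0y
  set x : ℝ := max y (2 * y * f y / d + 1) with hxref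
  have hx1 : y ≤ x := le_max_left _ _
  have hx0 : 0 < x := lt_of_lt_of_le hy hx1
  have hfyfx : f y ≤ f x :=
    hmono.monotoneOn (Set.mem_Ici.mpr hy.le) (Set.mem_Ici.mpr hx0.le) hx1
  have hx2 : 2 * y * f y < x * d := by
    have h1 : 2 * y * f y / d < x :=
      lt_of_lt_of_le (lt_add_one _) (le_max_right _ _)
    calc 2 * y * f y = (2 * y * f y / d) * d := by field_simp
    _ < x * d := by exact mul_lt_mul_of_pos_right h1 hd
  have f00 : 0 ≤ f 0 := hnonneg 0 le_rfl
  have fy0 : 0 < f y := lt_of_le_of_lt f00 h0y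
  have fx0 : 0 < f x := lt_of_lt_of_le fy0 hfyfx
  have hA : 0 < f x + f y := by linarith
  have hB : 0 < f x + f 0 := by linarith
  refine ⟨x, hx0, ?_⟩
  rw [← add_div, div_lt_div_iff₀ hA hB]
  have key : y * f y * (f x + f 0) < x * f x * (f y - f 0) := by
    have hx2' : 2 * y * f y < x * (f y - f 0) := hx2
    nlinarith [mul_lt_mul_of_pos_right hx2' fx0, mul_pos hy fy0]
  nlinarith [key]
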